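/- Let τ_1, ..., τ_n be i.i.d. nonnegative random variables with E(τ_1) < ∞ and E(τ_1²) < ∞. Then E[max{τ_1,...,τ_n}] ≤ E(τ_1) + (n-1) [(E(τ_1²) - E(τ_1)²)/(2n-1)]^{1/2}. -/

import Mathlib

open MeasureTheory ProbabilityTheory Set Filter
open scoped Topology ENNReal NNReal

open MeasureTheory ProbabilityTheory Set Filter
open scoped Topology ENNReal NNReal

noncomputable def quant (μ : Measure ℝ) (u : ℝ) : ℝ := sInf {x | u ≤ cdf μ x}

variable {μ : Measure ℝ} [IsProbabilityMeasure μ] {u x : ℝ}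

omit [IsProbabilityMeasure μ] in
lemma quant_set_nonempty (hu : u < 1) : {x | u ≤ cdf μ x}.Nonempty := by
  obtain ⟨x, hx⟩ := ((tendsto_cdf_atTop μ).eventually_const_le hu).exists
  exact ⟨x, hx⟩

omit [IsProbabilityMeasure μ] in
lemma quant_set_bddBelow (hu : 0 < u) : BddBelow {x | u ≤ cdf μ x} := by
  obtain ⟨y, hy⟩ := ((tendsto_cdf_atBot μ).eventually_lt_const hu).exists
  exact ⟨y, fun z hz => by
    by_contra h
    push_neg at h
    exact absurd (le_trans hz (monotone_cdf μ h.le)) (not_le.2 hy)⟩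

omit [IsProbabilityMeasure μ] in
lemma le_cdf_quant (hu0 : 0 < u) (hu1 : u < 1) : u ≤ cdf μ (quant μ u) := by
  have h1 : ∀ y ∈ Ioi (quant μ u), u ≤ cdf μ y := by
    intro y hy
    obtain ⟨z, hz, hzy⟩ := exists_lt_of_csInf_lt (quant_set_nonempty hu1) hy
    exact le_trans hz (monotone_cdf μ hzy.le)
  have h2 : Tendsto (cdf μ) (𝓝[>] (quant μ u)) (𝓝 (cdf μ (quant μ u))) :=
    ((cdf μ).right_continuous _).tendsto.mono_left (nhdsWithin_mono _ Ioi_subset_Ici_self)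
  exact ge_of_tendsto h2 (eventually_nhdsWithin_of_forall h1)

omit [IsProbabilityMeasure μ] in
lemma quant_le_iff (hu0 : 0 < u) (hu1 : u < 1) : quant μ u ≤ x ↔ u ≤ cdf μ x :=
  ⟨fun h => le_trans (le_cdf_quant hu0 hu1) (monotone_cdf μ h),
   fun h => csInf_le (quant_set_bddBelow hu0) h⟩

omit [IsProbabilityMeasure μ] in
lemma monotoneOn_quant : MonotoneOn (quant μ) (Ioo 0 1) := fun _ ha _ hb hab =>
  csInf_le_csInf (quant_set_bddBelow ha.1) (quant_set_nonempty hb.2)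
    (fun _ hx => le_trans hab hx)

omit [IsProbabilityMeasure μ] in
lemma aemeasurable_quant : AEMeasurable (quant μ) (volume.restrict (Ioo 0 1)) :=
  aemeasurable_restrict_of_monotoneOn measurableSet_Ioo monotoneOn_quant

lemma quant_preimage (x : ℝ) :
    quant μ ⁻¹' (Iic x) ∩ Ioo 0 1 = Iic (cdf μ x) ∩ Ioo 0 1 := by
  ext u
  simp only [mem_inter_iff, mem_preimage, mem_Iic, mem_Ioo, and_congr_left_iff]
  intro hu
  exact quant_le_iff hu.1 hu.2

lemma inter_Ioo_ae_Ioc {c : ℝ} (h1 : c ≤ 1) :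
    (Iic c ∩ Ioo (0:ℝ) 1 : Set ℝ) =ᵐ[volume] (Ioc 0 c : Set ℝ) := by
  rw [MeasureTheory.ae_eq_set]
  constructor
  · have he : (Iic c ∩ Ioo (0:ℝ) 1) \ Ioc 0 c = (∅ : Set ℝ) := by
      rw [Set.eq_empty_iff_forall_notMem]
      rintro u ⟨⟨h1, h2, h3⟩, h4⟩
      exact h4 ⟨h2, h1⟩
    rw [he, measure_empty]
  · refine measure_mono_null (t := {(1:ℝ)}) (fun u hu => ?_) Real.volume_singleton
    simp only [mem_diff, mem_inter_iff, mem_Iic, mem_Ioo, mem_Ioc, not_and, not_lt] at hu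
    have h2 := hu.2 hu.1.2 hu.1.1
    have : u = 1 := le_antisymm (hu.1.2.trans h1) h2
    exact this ▸ rfl

lemma volume_restrict_Ioo_prob : IsProbabilityMeasure (volume.restrict (Ioo (0:ℝ) 1)) := by
  constructor
  rw [Measure.restrict_apply MeasurableSet.univ, Set.univ_inter, Real.volume_Ioo]
  norm_num

lemma setInt_pow (k : ℕ) {c : ℝ} (h0 : 0 ≤ c) :
    ∫ v in Ioc (0:ℝ) c, v ^ k = c ^ (k+1) / ((k:ℝ)+1) := by
  rw [← intervalIntegral.integral_of_le h0, integral_pow]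
  simp

lemma integrableOn_pow (k : ℕ) {c : ℝ} (h0 : 0 ≤ c) :
    IntegrableOn (fun v : ℝ => v ^ k) (Ioc 0 c) := by
  have := intervalIntegral.intervalIntegrable_pow (μ := volume) (a := 0) (b := c) k
  rwa [intervalIntegrable_iff_integrableOn_Ioc_of_le h0] at this

lemma lint_w {n : ℕ} (hn : 0 < n) {c : ℝ} (h0 : 0 ≤ c) :
    ∫⁻ v in Ioc (0:ℝ) c, ENNReal.ofReal ((n:ℝ) * v ^ (n-1)) = ENNReal.ofReal (c ^ n) := by
  rw [← MeasureTheory.ofReal_integral_eq_lintegral_ofReal]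
  · congr 1
    rw [integral_const_mul, setInt_pow (n-1) h0, Nat.sub_add_cancel hn]
    have hc : ((n - 1 : ℕ) : ℝ) + 1 = (n:ℝ) := by
      rw [Nat.cast_sub hn]; ring
    rw [hc]
    have : (n:ℝ) ≠ 0 := Nat.cast_ne_zero.mpr hn.ne'
    field_simp
  · exact (integrableOn_pow (n-1) h0).const_mul _
  · filter_upwards [ae_restrict_mem measurableSet_Ioc] with v hv
    have : (0:ℝ) ≤ v := hv.1.le
    positivity

noncomputable def wden (n : ℕ) : Measure ℝ :=
  (volume.restrict (Ioo 0 1)).withDensity (fun v => ENNReal.ofReal ((n:ℝ) * v ^ (n-1)))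

lemma wden_apply (n : ℕ) {s : Set ℝ} (hs : MeasurableSet s) :
    wden n s = ∫⁻ v in s ∩ Ioo 0 1, ENNReal.ofReal ((n:ℝ) * v ^ (n-1)) ∂volume := by
  rw [wden, withDensity_apply _ hs, Measure.restrict_restrict hs]

lemma wden_compl_null (n : ℕ) : wden n ((Ioo (0:ℝ) 1)ᶜ) = 0 := by
  rw [wden_apply n measurableSet_Ioo.compl, compl_inter_self, Measure.restrict_empty,
    lintegral_zero_measure]

lemma wden_inter_Iic {n : ℕ} (hn : 0 < n) {c : ℝ} (h0 : 0 ≤ c) (h1 : c ≤ 1) :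
    wden n (Iic c ∩ Ioo 0 1) = ENNReal.ofReal (c ^ n) := by
  rw [wden_apply n (measurableSet_Iic.inter measurableSet_Ioo), inter_assoc, inter_self,
    setLIntegral_congr (inter_Ioo_ae_Ioc h1), lint_w hn h0]

lemma wden_prob {n : ℕ} (hn : 0 < n) : IsProbabilityMeasure (wden n) := by
  constructor
  rw [wden_apply n MeasurableSet.univ, univ_inter,
    setLIntegral_congr (Ioo_ae_eq_Ioc (a := (0:ℝ)) (b := 1)), lint_w hn zero_le_one]
  simp

lemma map_quant_eq : (volume.restrict (Ioo 0 1)).map (quant μ) = μ := by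
  haveI := volume_restrict_Ioo_prob
  haveI : IsProbabilityMeasure ((volume.restrict (Ioo (0:ℝ) 1)).map (quant μ)) :=
    Measure.isProbabilityMeasure_map aemeasurable_quant
  refine Measure.ext_of_Iic _ _ (fun x => ?_)
  rw [Measure.map_apply_of_aemeasurable aemeasurable_quant measurableSet_Iic,
      Measure.restrict_apply' measurableSet_Ioo, quant_preimage,
      measure_congr (inter_Ioo_ae_Ioc (cdf_le_one μ x)),
      Real.volume_Ioc, ← ofReal_cdf μ x]
  norm_num

lemma map_quant_wden {n : ℕ} (hn : 0 < n) (ν : Measure ℝ) [IsProbabilityMeasure ν]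
    (hν : ∀ x, ν (Iic x) = (μ (Iic x))^n) : (wden n).map (quant μ) = ν := by
  haveI := wden_prob hn
  have haew : AEMeasurable (quant μ) (wden n) :=
    aemeasurable_quant.mono_ac (withDensity_absolutelyContinuous _ _)
  haveI : IsProbabilityMeasure ((wden n).map (quant μ)) := Measure.isProbabilityMeasure_map haew
  refine Measure.ext_of_Iic _ _ (fun x => ?_)
  rw [Measure.map_apply_of_aemeasurable haew measurableSet_Iic]
  have hae : (quant μ ⁻¹' Iic x) =ᵐ[wden n] (Iic (cdf μ x) ∩ Ioo 0 1 : Set ℝ) := by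
    rw [MeasureTheory.ae_eq_set]
    constructor
    · refine measure_mono_null ?_ (wden_compl_null n)
      intro u hu
      by_contra hc
      rw [mem_compl_iff, not_not] at hc
      have : u ∈ Iic (cdf μ x) ∩ Ioo 0 1 := by
        rw [← quant_preimage]; exact ⟨hu.1, hc⟩
      exact hu.2 this
    · refine measure_mono_null ?_ (wden_compl_null n)
      intro u hu
      by_contra hc
      rw [mem_compl_iff, not_not] at hc
      have : u ∈ quant μ ⁻¹' (Iic x) ∩ Ioo 0 1 := by
        rw [quant_preimage]; exact ⟨hu.1.1, hc⟩
      exact hu.2 this.1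
  rw [measure_congr hae, wden_inter_Iic hn (cdf_nonneg μ x) (cdf_le_one μ x), hν x,
    ← ofReal_cdf μ x, ← ENNReal.ofReal_pow (cdf_nonneg μ x)]

lemma cs_core {α : Type*} [MeasurableSpace α] (P : Measure α) [IsProbabilityMeasure P]
    (f g : α → ℝ) (hf : Integrable f P) (hf2 : Integrable (fun x => f x ^ 2) P)
    (hg : Integrable g P) (hg2 : Integrable (fun x => g x ^ 2) P)
    (hfg : Integrable (fun x => f x * g x) P) (hg1 : ∫ x, g x ∂P = 1) :
    (∫ x, f x * g x ∂P) ≤ (∫ x, f x ∂P)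
      + Real.sqrt ((∫ x, f x ^ 2 ∂P) - (∫ x, f x ∂P)^2) * Real.sqrt ((∫ x, g x ^ 2 ∂P) - 1)
    ∧ 0 ≤ (∫ x, f x ^ 2 ∂P) - (∫ x, f x ∂P)^2 := by
  set a := ∫ x, f x ∂P with ha
  set Iv := (∫ x, f x * g x ∂P) - a with hIv
  set V := (∫ x, f x ^ 2 ∂P) - a^2 with hV
  set c := (∫ x, g x ^ 2 ∂P) - 1 with hc
  have key : ∀ t : ℝ, 0 ≤ V - 2*t*Iv + t^2*c := by
    intro t
    have heval : ∫ x, (f x - a - t*(g x - 1))^2 ∂P = V - 2*t*Iv + t^2*c := by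
      have hexp : (fun x => (f x - a - t*(g x - 1))^2)
          = fun x => (f x^2 - (2*a)*f x) + ((-(2*t))*(f x * g x) + ((2*t)*f x
            + ((2*a*t - 2*t^2)*g x + (t^2*(g x^2) + (a^2 - 2*a*t + t^2))))) := by
        funext x; ring
      have i1 : Integrable (fun x => f x^2 - (2*a)*f x) P := hf2.sub (hf.const_mul _)
      have i2 : Integrable (fun x => (-(2*t))*(f x * g x)) P := hfg.const_mul _
      have i3 : Integrable (fun x => (2*t)*f x) P := hf.const_mul _
      have i4 : Integrable (fun x => (2*a*t - 2*t^2)*g x) P := hg.const_mul _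
      have i5 : Integrable (fun x => t^2*(g x^2)) P := hg2.const_mul _
      have i6 : Integrable (fun _ : α => (a^2 - 2*a*t + t^2)) P := integrable_const _
      have i56 : Integrable (fun x => t^2*(g x^2) + (a^2 - 2*a*t + t^2)) P := i5.add i6
      have i456 : Integrable (fun x => (2*a*t - 2*t^2)*g x
        + (t^2*(g x^2) + (a^2 - 2*a*t + t^2))) P := i4.add i56
      have i3456 : Integrable (fun x => (2*t)*f x + ((2*a*t - 2*t^2)*g x
        + (t^2*(g x^2) + (a^2 - 2*a*t + t^2)))) P := i3.add i456
      have i23456 : Integrable (fun x => (-(2*t))*(f x * g x) + ((2*t)*f x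
        + ((2*a*t - 2*t^2)*g x + (t^2*(g x^2) + (a^2 - 2*a*t + t^2))))) P := i2.add i3456
      rw [hexp, integral_add i1 i23456, integral_add i2 i3456,
        integral_add i3 i456, integral_add i4 i56,
        integral_add i5 i6, integral_sub hf2 (hf.const_mul _),
        integral_const_mul, integral_const_mul, integral_const_mul, integral_const_mul,
        integral_const_mul, integral_const]
      simp only [measure_univ, probReal_univ, ENNReal.toReal_one, smul_eq_mul, one_mul, hg1]
      ring
    rw [← heval]
    exact integral_nonneg (fun x => sq_nonneg _)
  have hV0 : 0 ≤ V := by simpa using key 0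
  have hceq : ∫ x, (g x - 1)^2 ∂P = c := by
    have hexp : (fun x => (g x - 1)^2) = fun x => g x^2 + ((-2)*g x + 1) := by funext x; ring
    have j1 : Integrable (fun x => (-2:ℝ)*g x) P := hg.const_mul _
    have j2 : Integrable (fun _ : α => (1:ℝ)) P := integrable_const _
    have j12 : Integrable (fun x => (-2:ℝ)*g x + 1) P := j1.add j2
    rw [hexp, integral_add hg2 j12, integral_add j1 j2, integral_const_mul, integral_const]
    simp only [measure_univ, probReal_univ, ENNReal.toReal_one, smul_eq_mul, one_mul, hg1]
    ring
  have hc0 : 0 ≤ c := hceq ▸ integral_nonneg (fun x => sq_nonneg _)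
  have hI2 : Iv^2 ≤ V * c := by
    rcases eq_or_lt_of_le hc0 with h | h
    · have hI0 : Iv = 0 := by
        by_contra hne
        have h1 := key ((V+1)/(2*Iv))
        rw [← h] at h1
        have h2 : 2*((V+1)/(2*Iv))*Iv = V + 1 := by field_simp
        nlinarith [h1, h2]
      rw [hI0, ← h]
      simp
    · have h1 := key (Iv/c)
      have h2 : V - 2*(Iv/c)*Iv + (Iv/c)^2*c = V - Iv^2/c := by field_simp; ring
      rw [h2] at h1
      have := (div_le_iff₀ h).1 (by linarith : Iv^2/c ≤ V)
      linarith [this]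
  have hIle : Iv ≤ Real.sqrt V * Real.sqrt c := by
    calc Iv ≤ |Iv| := le_abs_self Iv
    _ = Real.sqrt (Iv^2) := (Real.sqrt_sq_eq_abs Iv).symm
    _ ≤ Real.sqrt (V*c) := Real.sqrt_le_sqrt hI2
    _ = _ := Real.sqrt_mul hV0 c
  exact ⟨by linarith [hIle], hV0⟩

lemma W_int {n : ℕ} (hn : 0 < n) : ∫ v in Ioo (0:ℝ) 1, (n:ℝ) * v ^ (n-1) = 1 := by
  rw [← MeasureTheory.integral_Ioc_eq_integral_Ioo, integral_const_mul,
    setInt_pow (n-1) zero_le_one, one_pow]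
  have hc : ((n - 1 : ℕ) : ℝ) + 1 = (n:ℝ) := by rw [Nat.cast_sub hn]; ring
  rw [hc]
  have : (n:ℝ) ≠ 0 := Nat.cast_ne_zero.mpr hn.ne'
  field_simp

lemma W_sq_int {n : ℕ} (hn : 0 < n) :
    ∫ v in Ioo (0:ℝ) 1, ((n:ℝ) * v ^ (n-1))^2 = (n:ℝ)^2/(2*(n:ℝ)-1) := by
  have hexp : (fun v : ℝ => ((n:ℝ) * v ^ (n-1))^2) = fun v => (n:ℝ)^2 * v ^ ((n-1)*2) := by
    funext v; rw [mul_pow, ← pow_mul]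
  rw [hexp, ← MeasureTheory.integral_Ioc_eq_integral_Ioo, integral_const_mul,
    setInt_pow ((n-1)*2) zero_le_one, one_pow]
  have hc : (((n - 1) * 2 : ℕ) : ℝ) + 1 = 2*(n:ℝ) - 1 := by
    push_cast [Nat.cast_sub hn]; ring
  rw [hc]
  have h1 : (1:ℝ) ≤ (n:ℝ) := by exact_mod_cast hn
  have : 2*(n:ℝ) - 1 ≠ 0 := by nlinarith
  field_simp

lemma W_integrable {n : ℕ} (hn : 0 < n) :
    Integrable (fun v : ℝ => (n:ℝ) * v ^ (n-1)) (volume.restrict (Ioo 0 1)) := by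
  haveI := volume_restrict_Ioo_prob
  refine (integrable_const ((n:ℝ))).mono'
    ((continuous_const.mul (continuous_pow _)).aestronglyMeasurable) ?_
  filter_upwards [ae_restrict_mem measurableSet_Ioo] with v hv
  rw [Real.norm_eq_abs, abs_of_nonneg (mul_nonneg (Nat.cast_nonneg n) (pow_nonneg hv.1.le _))]
  calc (n:ℝ) * v ^ (n-1) ≤ (n:ℝ) * 1 := by
        gcongr
        exact pow_le_one₀ hv.1.le hv.2.le
  _ = (n:ℝ) := mul_one _

lemma W_sq_integrable {n : ℕ} (hn : 0 < n) :
    Integrable (fun v : ℝ => ((n:ℝ) * v ^ (n-1))^2) (volume.restrict (Ioo 0 1)) := by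
  haveI := volume_restrict_Ioo_prob
  refine (integrable_const ((n:ℝ)^2)).mono'
    (((continuous_const.mul (continuous_pow _)).pow 2).aestronglyMeasurable) ?_
  filter_upwards [ae_restrict_mem measurableSet_Ioo] with v hv
  rw [Real.norm_eq_abs, abs_of_nonneg (pow_nonneg (mul_nonneg (Nat.cast_nonneg n) (pow_nonneg hv.1.le _)) 2)]
  have h1 : (n:ℝ) * v ^ (n-1) ≤ (n:ℝ) * 1 := by
    gcongr
    exact pow_le_one₀ hv.1.le hv.2.le
  have h0 : (0:ℝ) ≤ (n:ℝ) * v ^ (n-1) := mul_nonneg (Nat.cast_nonneg n) (pow_nonneg hv.1.le _)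
  nlinarith

/-- Gumbel/Hartley–David bound: for i.i.d. nonnegative τ_1,...,τ_n with
finite first and second moments,
E[max τ_i] ≤ E(τ_1) + (n-1) sqrt((E(τ_1²) - E(τ_1)²)/(2n-1)). -/
theorem stmt_16 {Ω : Type*} [MeasurableSpace Ω] (P : Measure Ω) [IsProbabilityMeasure P]
    (n : ℕ) (hn : 0 < n) (i0 : Fin n)
    (τ : Fin n → Ω → ℝ) (hmeas : ∀ i, Measurable (τ i))
    (hnonneg : ∀ i ω, 0 ≤ τ i ω)
    (hindep : iIndepFun τ P)
    (hid : ∀ i j, P.map (τ i) = P.map (τ j))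
    (hint : ∀ i, Integrable (τ i) P)
    (hint2 : ∀ i, Integrable (fun ω => (τ i ω) ^ 2) P) :
    ∫ ω, Finset.univ.sup' ⟨i0, Finset.mem_univ i0⟩ (fun i => τ i ω) ∂P
      ≤ (∫ ω, τ i0 ω ∂P) +
        ((n : ℝ) - 1) *
          Real.sqrt (((∫ ω, (τ i0 ω) ^ 2 ∂P) - (∫ ω, τ i0 ω ∂P) ^ 2) / (2 * (n : ℝ) - 1)) := by
  classical
  haveI := volume_restrict_Ioo_prob
  set μ : Measure ℝ := P.map (τ i0) with hμ
  haveI : IsProbabilityMeasure μ := Measure.isProbabilityMeasure_map (hmeas i0).aemeasurable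
  set lam0 : Measure ℝ := volume.restrict (Ioo (0:ℝ) 1) with hlam0
  set Q : ℝ → ℝ := quant μ with hQ
  have hae : AEMeasurable Q lam0 := aemeasurable_quant
  set W : ℝ → ℝ := fun v => (n:ℝ) * v ^ (n-1) with hW
  set g : Ω → ℝ := fun ω => Finset.univ.sup' ⟨i0, Finset.mem_univ i0⟩ (fun i => τ i ω) with hg
  have hgmeas : Measurable g := by
    have h1 : Measurable (Finset.univ.sup' ⟨i0, Finset.mem_univ i0⟩ τ) :=
      Finset.measurable_sup' _ (fun i _ => hmeas i)
    have h2 : g = Finset.univ.sup' ⟨i0, Finset.mem_univ i0⟩ τ := by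
      funext ω
      exact (Finset.sup'_apply _ τ ω).symm
    rwa [h2]
  set ν : Measure ℝ := P.map g with hν
  haveI : IsProbabilityMeasure ν := Measure.isProbabilityMeasure_map hgmeas.aemeasurable
  have hνIic : ∀ x : ℝ, ν (Iic x) = (μ (Iic x))^n := by
    intro t
    rw [hν, Measure.map_apply hgmeas measurableSet_Iic]
    have hpre : g ⁻¹' (Iic t) = ⋂ i, τ i ⁻¹' (Iic t) := by
      ext ω
      simp [hg, Finset.sup'_le_iff, mem_iInter, mem_preimage, mem_Iic]
      exact ⟨fun h i => (Finset.sup'_le_iff _ _).1 h i (Finset.mem_univ i), fun h => (Finset.sup'_le_iff _ _).2 fun i _ => h i⟩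
    rw [hpre, hindep.meas_iInter (fun i => ⟨Iic t, measurableSet_Iic, rfl⟩)]
    have heach : ∀ i, P (τ i ⁻¹' (Iic t)) = μ (Iic t) := by
      intro i
      rw [hμ, ← hid i i0, Measure.map_apply (hmeas i) measurableSet_Iic]
    rw [Finset.prod_congr rfl (fun i _ => heach i)]
    simp [Finset.prod_const, Finset.card_univ]
  have hmap1 : lam0.map Q = μ := map_quant_eq
  have hmap2 : (wden n).map Q = ν := map_quant_wden hn ν hνIic
  have haew : AEMeasurable Q (wden n) :=
    hae.mono_ac (withDensity_absolutelyContinuous _ _)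
  -- integral identities
  have hEτ : ∫ ω, τ i0 ω ∂P = ∫ u, Q u ∂lam0 := by
    have h1 : ∫ x, x ∂μ = ∫ ω, τ i0 ω ∂P := by
      rw [hμ, integral_map (f := fun x : ℝ => x) (hmeas i0).aemeasurable aestronglyMeasurable_id]
    have h2 : ∫ x, x ∂μ = ∫ u, Q u ∂lam0 := by
      rw [← hmap1, integral_map (f := fun x : ℝ => x) hae aestronglyMeasurable_id]
    rw [← h1, h2]
  have hEτ2 : ∫ ω, (τ i0 ω)^2 ∂P = ∫ u, (Q u)^2 ∂lam0 := by
    have hsm : AEStronglyMeasurable (fun x : ℝ => x^2) μ :=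
      (continuous_pow 2).aestronglyMeasurable
    have h1 : ∫ x, x^2 ∂μ = ∫ ω, (τ i0 ω)^2 ∂P := by
      rw [hμ, integral_map (hmeas i0).aemeasurable]
      exact (continuous_pow 2).aestronglyMeasurable
    have h2 : ∫ x, x^2 ∂μ = ∫ u, (Q u)^2 ∂lam0 := by
      rw [← hmap1, integral_map hae]
      exact (continuous_pow 2).aestronglyMeasurable
    rw [← h1, h2]
  have hwd : wden n = lam0.withDensity (fun v => ((Real.toNNReal (W v) : ℝ≥0) : ℝ≥0∞)) := rfl
  have hEg : ∫ ω, g ω ∂P = ∫ u, W u * Q u ∂lam0 := by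
    have h1 : ∫ x, x ∂ν = ∫ ω, g ω ∂P := by
      rw [hν, integral_map (f := fun x : ℝ => x) hgmeas.aemeasurable aestronglyMeasurable_id]
    have h2 : ∫ x, x ∂ν = ∫ u, Q u ∂(wden n) := by
      rw [← hmap2, integral_map (f := fun x : ℝ => x) haew aestronglyMeasurable_id]
    have h3 : ∫ u, Q u ∂(wden n) = ∫ u, (Real.toNNReal (W u) : ℝ≥0) • Q u ∂lam0 := by
      rw [hwd, integral_withDensity_eq_integral_smul₀ ?hmw Q]
      case hmw =>
        exact ((continuous_const.mul (continuous_pow _)).measurable.real_toNNReal).aemeasurable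
    have h4 : ∫ u, (Real.toNNReal (W u) : ℝ≥0) • Q u ∂lam0 = ∫ u, W u * Q u ∂lam0 := by
      refine integral_congr_ae ?_
      filter_upwards [ae_restrict_mem measurableSet_Ioo] with v hv
      rw [NNReal.smul_def, smul_eq_mul, Real.coe_toNNReal _
        (mul_nonneg (Nat.cast_nonneg n) (pow_nonneg hv.1.le _))]
    rw [← h1, h2, h3, h4]
  -- integrability
  have hQint : Integrable Q lam0 := by
    have h1 : Integrable (fun x : ℝ => x) μ := by
      rw [hμ, integrable_map_measure (g := fun x : ℝ => x) aestronglyMeasurable_id (hmeas i0).aemeasurable]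
      exact hint i0
    rw [← hmap1, integrable_map_measure (g := fun x : ℝ => x) aestronglyMeasurable_id hae] at h1
    exact h1
  have hQ2int : Integrable (fun u => (Q u)^2) lam0 := by
    have h1 : Integrable (fun x : ℝ => x^2) μ := by
      rw [hμ, integrable_map_measure ((continuous_pow 2).aestronglyMeasurable)
        (hmeas i0).aemeasurable]
      exact hint2 i0
    rw [← hmap1, integrable_map_measure ((continuous_pow 2).aestronglyMeasurable) hae] at h1
    exact h1
  have hWint : Integrable W lam0 := W_integrable hn
  have hW2int : Integrable (fun u => (W u)^2) lam0 := W_sq_integrable hn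
  have hQWint : Integrable (fun u => Q u * W u) lam0 := by
    refine ((hQint.abs.const_mul ((n:ℝ))).mono'
      (hae.aestronglyMeasurable.mul
        ((continuous_const.mul (continuous_pow _)).aestronglyMeasurable)) ?_)
    filter_upwards [ae_restrict_mem measurableSet_Ioo] with v hv
    have hW0 : 0 ≤ W v := mul_nonneg (Nat.cast_nonneg n) (pow_nonneg hv.1.le _)
    have hWle : W v ≤ (n:ℝ) := by
      have h' : (n:ℝ) * v ^ (n-1) ≤ (n:ℝ) * 1 := by
        gcongr
        exact pow_le_one₀ hv.1.le hv.2.le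
      simpa using h'
    rw [Real.norm_eq_abs, abs_mul, abs_of_nonneg hW0]
    calc |Q v| * W v ≤ |Q v| * (n:ℝ) := by gcongr
    _ = (n:ℝ) * |Q v| := mul_comm _ _
  have hcs := cs_core lam0 Q W hQint hQ2int hWint hW2int hQWint (W_int hn)
  obtain ⟨hcs1, hcs2⟩ := hcs
  -- arithmetic
  have hn1 : (1:ℝ) ≤ (n:ℝ) := by exact_mod_cast hn
  have h2n1 : (0:ℝ) < 2*(n:ℝ) - 1 := by linarith
  have hWsq : (∫ u, (W u)^2 ∂lam0) - 1 = ((n:ℝ)-1)^2 / (2*(n:ℝ)-1) := by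
    rw [hlam0, hW]
    rw [W_sq_int hn]
    rw [div_sub_one h2n1.ne']; congr 1; ring
  have hfin : Real.sqrt ((∫ u, (Q u)^2 ∂lam0) - (∫ u, Q u ∂lam0)^2)
      * Real.sqrt ((∫ u, (W u)^2 ∂lam0) - 1)
      = ((n:ℝ)-1) * Real.sqrt (((∫ u, (Q u)^2 ∂lam0) - (∫ u, Q u ∂lam0)^2) / (2*(n:ℝ)-1)) := by
    rw [hWsq, Real.sqrt_div (sq_nonneg _), Real.sqrt_sq (by linarith : (0:ℝ) ≤ (n:ℝ)-1),
      Real.sqrt_div hcs2]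
    ring
  have hQWcomm : ∫ u, W u * Q u ∂lam0 = ∫ u, Q u * W u ∂lam0 := by
    congr 1
    funext u
    ring
  calc ∫ ω, Finset.univ.sup' ⟨i0, Finset.mem_univ i0⟩ (fun i => τ i ω) ∂P
      = ∫ u, Q u * W u ∂lam0 := by rw [← hQWcomm, ← hEg]
  _ ≤ (∫ u, Q u ∂lam0) + Real.sqrt ((∫ u, (Q u)^2 ∂lam0) - (∫ u, Q u ∂lam0)^2)
      * Real.sqrt ((∫ u, (W u)^2 ∂lam0) - 1) := hcs1
  _ = (∫ ω, τ i0 ω ∂P) + ((n:ℝ)-1) *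
      Real.sqrt (((∫ ω, (τ i0 ω)^2 ∂P) - (∫ ω, τ i0 ω ∂P)^2) / (2*(n:ℝ)-1)) := by
    rw [hfin, hEτ, hEτ2]
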